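/- arXiv:1608.03962 — 3 statements merged into one kernel-verified Lean document; each statement's English description precedes it below -/
import Mathlib

section
/- Let p, q ∈ ℝ with p ≠ 0, and let G be the antisymmetric function on ordered triples of indices from {1,…,6} determined by setting G_{213} = G_{124} = G_{136} = G_{145} = G_{516} = G_{235} = G_{246} = G_{256} = G_{435} = G_{346} = p and G_{215} = G_{216} = G_{314} = G_{135} = G_{146} = G_{324} = G_{236} = G_{245} = G_{536} = G_{546} = q (and G_{ijk} = 0 whenever two indices coincide). If G satisfies the Plücker relation G_{123}·G_{345} = G_{423}·G_{315} + G_{523}·G_{341}, then q = φ·p or q = (1−φ)·p, where φ = (1+√5)/2. -/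
/-- The golden ratio. -/
noncomputable def phi : ℝ := (1 + Real.sqrt 5) / 2

/-- Let `G` be an antisymmetric function on ordered triples of indices from `Fin 6`
(indices are 0-based, so the paper's index `n` is `n-1` here), whose values on the
prolate triples are `p` and on the oblate triples are `q`, with `p ≠ 0`.  If `G`
satisfies the Plücker relation `G₁₂₃·G₃₄₅ = G₄₂₃·G₃₁₅ + G₅₂₃·G₃₄₁`, then `q = φ·p`
or `q = (1−φ)·p`. -/
theorem plucker_forces_golden_ratio (p q : ℝ) (hp : p ≠ 0) (G : Fin 6 → Fin 6 → Fin 6 → ℝ)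
    (hswap12 : ∀ i j k, G i j k = -G j i k)
    (hswap23 : ∀ i j k, G i j k = -G i k j)
    -- prolate values: G_{213} = G_{124} = G_{136} = G_{145} = G_{516}
    --               = G_{235} = G_{246} = G_{256} = G_{435} = G_{346} = p
    (hp1 : G 1 0 2 = p) (hp2 : G 0 1 3 = p) (hp3 : G 0 2 5 = p) (hp4 : G 0 3 4 = p)
    (hp5 : G 4 0 5 = p) (hp6 : G 1 2 4 = p) (hp7 : G 1 3 5 = p) (hp8 : G 1 4 5 = p)
    (hp9 : G 3 2 4 = p) (hp10 : G 2 3 5 = p)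
    -- oblate values: G_{215} = G_{216} = G_{314} = G_{135} = G_{146}
    --              = G_{324} = G_{236} = G_{245} = G_{536} = G_{546} = q
    (hq1 : G 1 0 4 = q) (hq2 : G 1 0 5 = q) (hq3 : G 2 0 3 = q) (hq4 : G 0 2 4 = q)
    (hq5 : G 0 3 5 = q) (hq6 : G 2 1 3 = q) (hq7 : G 1 2 5 = q) (hq8 : G 1 3 4 = q)
    (hq9 : G 4 2 5 = q) (hq10 : G 4 3 5 = q)
    -- the Plücker relation G_{123}·G_{345} = G_{423}·G_{315} + G_{523}·G_{341}
    (hplucker : G 0 1 2 * G 2 3 4 = G 3 1 2 * G 2 0 4 + G 4 1 2 * G 2 3 0) :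
    q = phi * p ∨ q = (1 - phi) * p := by
  have e1 : G 0 1 2 = -p := by rw [hswap12, hp1]
  have e2 : G 2 3 4 = -p := by rw [hswap12, hp9]
  have e3 : G 3 1 2 = -q := by rw [hswap12, hswap23 1 3 2, hswap12 1 2 3, hq6]; ring
  have e4 : G 2 0 4 = -q := by rw [hswap12, hq4]
  have e5 : G 4 1 2 = p := by rw [hswap12, hswap23 1 4 2, hp6]; ring
  have e6 : G 2 3 0 = -q := by rw [hswap23, hq3]
  rw [e1, e2, e3, e4, e5, e6] at hplucker
  have key : q * q - p * q - p * p = 0 := by linear_combination -hplucker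
  have h5 : Real.sqrt 5 ^ 2 = 5 := Real.sq_sqrt (by norm_num)
  have hfac : (q - phi * p) * (q - (1 - phi) * p) = 0 := by
    have : phi * (1 - phi) = -1 := by unfold phi; linear_combination (-(1:ℝ)/4) * h5
    linear_combination key + p^2 * this
  rcases mul_eq_zero.mp hfac with h | h
  · left; linarith
  · right; linarith
end

section
/- Let F be a 3-dimensional linear subspace of ℝ⁶ with basis (u₁,u₂,u₃), and suppose its Grassmann coordinates G_{ijk} = G_{ijk}(u₁,u₂,u₃) satisfy both the prolate alternation equations G_{213} = G_{124} = G_{136} = G_{145} = G_{516} = G_{235} = G_{246} = G_{256} = G_{435} = G_{346} and the oblate alternation equations G_{215} = G_{216} = G_{314} = G_{135} = G_{146} = G_{324} = G_{236} = G_{245} = G_{536} = G_{546}. Then F = span(w₁,w₂,w₃) or F = span(r₁,r₂,r₃). -/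
/-- The generators of the icosahedral slope `E`. -/
noncomputable def w1 : Fin 6 → ℝ := ![phi, phi, 0, 0, 1, -1]
noncomputable def w2 : Fin 6 → ℝ := ![1, -1, phi, phi, 0, 0]
noncomputable def w3 : Fin 6 → ℝ := ![0, 0, 1, -1, phi, phi]

/-- Their algebraic conjugates, generating the conjugate slope `E'`. -/
noncomputable def r1 : Fin 6 → ℝ := ![1 - phi, 1 - phi, 0, 0, 1, -1]
noncomputable def r2 : Fin 6 → ℝ := ![1, -1, 1 - phi, 1 - phi, 0, 0]
noncomputable def r3 : Fin 6 → ℝ := ![0, 0, 1, -1, 1 - phi, 1 - phi]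

/-- The Grassmann coordinate `G_{ijk}(u₁,u₂,u₃)` (0-based indices: the paper's index `n`
is `n-1` here). -/
noncomputable def G (u₁ u₂ u₃ : Fin 6 → ℝ) (i j k : Fin 6) : ℝ :=
  Matrix.det !![u₁ i, u₂ i, u₃ i; u₁ j, u₂ j, u₃ j; u₁ k, u₂ k, u₃ k]

/- ----------------------------------------------------------------
   Auxiliary lemmas
---------------------------------------------------------------- -/

lemma G_expand (u₁ u₂ u₃ : Fin 6 → ℝ) (i j k : Fin 6) :
    G u₁ u₂ u₃ i j k =
      u₁ i * (u₂ j * u₃ k - u₃ j * u₂ k) - u₂ i * (u₁ j * u₃ k - u₃ j * u₁ k)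
        + u₃ i * (u₁ j * u₂ k - u₂ j * u₁ k) := by
  simp [G, Matrix.det_fin_three]; ring

lemma G_swap12 (u₁ u₂ u₃ : Fin 6 → ℝ) (i j k : Fin 6) :
    G u₁ u₂ u₃ i j k = -G u₁ u₂ u₃ j i k := by
  rw [G_expand, G_expand]; ring

lemma G_swap23 (u₁ u₂ u₃ : Fin 6 → ℝ) (i j k : Fin 6) :
    G u₁ u₂ u₃ i j k = -G u₁ u₂ u₃ i k j := by
  rw [G_expand, G_expand]; ring

lemma G_cycle (u₁ u₂ u₃ : Fin 6 → ℝ) (i j k : Fin 6) :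
    G u₁ u₂ u₃ i j k = G u₁ u₂ u₃ j k i := by
  rw [G_expand, G_expand]; ring

lemma G_rep12 (u₁ u₂ u₃ : Fin 6 → ℝ) (i k : Fin 6) : G u₁ u₂ u₃ i i k = 0 := by
  rw [G_expand]; ring

lemma G_rep13 (u₁ u₂ u₃ : Fin 6 → ℝ) (i j : Fin 6) : G u₁ u₂ u₃ i j i = 0 := by
  rw [G_expand]; ring

lemma G_rep23 (u₁ u₂ u₃ : Fin 6 → ℝ) (i j : Fin 6) : G u₁ u₂ u₃ i j j = 0 := by
  rw [G_expand]; ring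

/-- The Plücker relation used in the proof. -/
lemma G_plucker (u₁ u₂ u₃ : Fin 6 → ℝ) :
    G u₁ u₂ u₃ 0 1 2 * G u₁ u₂ u₃ 0 3 4 - G u₁ u₂ u₃ 0 1 3 * G u₁ u₂ u₃ 0 2 4
      + G u₁ u₂ u₃ 0 1 4 * G u₁ u₂ u₃ 0 2 3 = 0 := by
  rw [G_expand, G_expand, G_expand, G_expand, G_expand, G_expand]; ring

/-- Laplace-type reconstruction identity: a vector of the family is determined by its
coordinates at positions `0, 1, 3` and the Grassmann coordinates. -/
lemma G_laplace (u₁ u₂ u₃ x : Fin 6 → ℝ) (hx : x = u₁ ∨ x = u₂ ∨ x = u₃) (l : Fin 6) :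
    G u₁ u₂ u₃ 0 1 3 * x l =
      x 0 * G u₁ u₂ u₃ l 1 3 + x 1 * G u₁ u₂ u₃ 0 l 3 + x 3 * G u₁ u₂ u₃ 0 1 l := by
  rcases hx with rfl | rfl | rfl <;>
    · rw [G_expand, G_expand, G_expand, G_expand]; ring

lemma G_all_zero (u₁ u₂ u₃ : Fin 6 → ℝ)
    (h : ∀ i j k : Fin 6, i < j → j < k → G u₁ u₂ u₃ i j k = 0) :
    ∀ i j k : Fin 6, G u₁ u₂ u₃ i j k = 0 := by
  have key : ∀ i j k : Fin 6, i < j → G u₁ u₂ u₃ i j k = 0 := by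
    intro i j k hij
    rcases lt_trichotomy j k with hjk | rfl | hjk
    · exact h i j k hij hjk
    · exact G_rep23 u₁ u₂ u₃ i j
    · rcases lt_trichotomy i k with hik | rfl | hik
      · rw [G_swap23, h i k j hik hjk, neg_zero]
      · exact G_rep13 u₁ u₂ u₃ i j
      · rw [G_cycle, G_cycle]
        exact h k i j hik hij
  intro i j k
  rcases lt_trichotomy i j with hij | rfl | hij
  · exact key i j k hij
  · exact G_rep12 u₁ u₂ u₃ i k
  · rw [G_swap12, key j i k hij, neg_zero]

/-- If all Grassmann coordinates vanish, the family is linearly dependent (Sylvester). -/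
lemma dep_of_G_zero (u₁ u₂ u₃ : Fin 6 → ℝ)
    (hall : ∀ i j k : Fin 6, G u₁ u₂ u₃ i j k = 0) :
    ¬ LinearIndependent ℝ ![u₁, u₂, u₃] := by
  intro hind
  have hli := Fintype.linearIndependent_iff.mp hind
  have h1 : u₁ ≠ 0 := by
    have := hind.ne_zero 0
    simpa using this
  obtain ⟨i, hi⟩ : ∃ i, u₁ i ≠ 0 := by
    by_contra hc; push_neg at hc; exact h1 (funext hc)
  by_cases hv2 : ∀ l, u₁ i * u₂ l - u₂ i * u₁ l = 0
  · have hz := hli ![-(u₂ i), u₁ i, 0] ?_ 1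
    · simp at hz; exact hi hz
    · funext l
      have := hv2 l
      simp [Fin.sum_univ_three]
      linarith
  · push_neg at hv2
    obtain ⟨j, hj⟩ := hv2
    have hk : ∀ l, (u₁ i * u₂ j - u₂ i * u₁ j) * (u₁ i * u₃ l - u₃ i * u₁ l)
        - (u₁ i * u₃ j - u₃ i * u₁ j) * (u₁ i * u₂ l - u₂ i * u₁ l)
        = u₁ i * G u₁ u₂ u₃ i j l := by
      intro l; rw [G_expand]; ring
    have hz := hli ![(u₁ i * u₃ j - u₃ i * u₁ j) * u₂ i - (u₁ i * u₂ j - u₂ i * u₁ j) * u₃ i,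
        -((u₁ i * u₃ j - u₃ i * u₁ j) * u₁ i),
        (u₁ i * u₂ j - u₂ i * u₁ j) * u₁ i] ?_ 2
    · simp only [Matrix.cons_val_two, Matrix.tail_cons, Matrix.head_cons] at hz
      rcases mul_eq_zero.mp hz with h | h
      exacts [hj h, hi h]
    · funext l
      have h0 := hk l
      rw [hall i j l, mul_zero] at h0
      simp [Fin.sum_univ_three]
      linear_combination h0


set_option maxHeartbeats 2000000 in
lemma G_sorted_zero (u₁ u₂ u₃ : Fin 6 → ℝ)
    (h1 : G u₁ u₂ u₃ 0 1 2 = 0) (h2 : G u₁ u₂ u₃ 0 1 3 = 0) (h3 : G u₁ u₂ u₃ 0 1 4 = 0)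
    (h4 : G u₁ u₂ u₃ 0 1 5 = 0) (h5 : G u₁ u₂ u₃ 0 2 3 = 0) (h6 : G u₁ u₂ u₃ 0 2 4 = 0)
    (h7 : G u₁ u₂ u₃ 0 2 5 = 0) (h8 : G u₁ u₂ u₃ 0 3 4 = 0) (h9 : G u₁ u₂ u₃ 0 3 5 = 0)
    (h10 : G u₁ u₂ u₃ 0 4 5 = 0) (h11 : G u₁ u₂ u₃ 1 2 3 = 0) (h12 : G u₁ u₂ u₃ 1 2 4 = 0)
    (h13 : G u₁ u₂ u₃ 1 2 5 = 0) (h14 : G u₁ u₂ u₃ 1 3 4 = 0) (h15 : G u₁ u₂ u₃ 1 3 5 = 0)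
    (h16 : G u₁ u₂ u₃ 1 4 5 = 0) (h17 : G u₁ u₂ u₃ 2 3 4 = 0) (h18 : G u₁ u₂ u₃ 2 3 5 = 0)
    (h19 : G u₁ u₂ u₃ 2 4 5 = 0) (h20 : G u₁ u₂ u₃ 3 4 5 = 0) :
    ∀ i j k : Fin 6, i < j → j < k → G u₁ u₂ u₃ i j k = 0 := by
  intro i j k hij hjk
  fin_cases i <;> fin_cases j <;> fin_cases k <;> simp_all

/-- The key span computation: if the normalized basis at positions `0,1,3` has the
explicit shape dictated by the alternation conditions (with ratio `t` satisfying
`t² = t + 1`), then the span is the explicit plane with parameter `t`. -/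
lemma span_eq_param (u₁ u₂ u₃ : Fin 6 → ℝ) (a t : ℝ) (ha : a ≠ 0) (ht : t ^ 2 = t + 1)
    (h1 : ∀ l, G u₁ u₂ u₃ l 1 3 = a * (![1, 0, t, 0, t, 1] : Fin 6 → ℝ) l)
    (h2 : ∀ l, G u₁ u₂ u₃ 0 l 3 = a * (![0, 1, -t, 0, -1, -t] : Fin 6 → ℝ) l)
    (h3 : ∀ l, G u₁ u₂ u₃ 0 1 l = a * (![0, 0, -1, 1, -t, -t] : Fin 6 → ℝ) l) :
    Submodule.span ℝ ({u₁, u₂, u₃} : Set (Fin 6 → ℝ)) =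
      Submodule.span ℝ ({![t, t, 0, 0, 1, -1], ![1, -1, t, t, 0, 0], ![0, 0, 1, -1, t, t]}
        : Set (Fin 6 → ℝ)) := by
  set v₁ : Fin 6 → ℝ := ![1, 0, t, 0, t, 1] with hv₁d
  set v₂ : Fin 6 → ℝ := ![0, 1, -t, 0, -1, -t] with hv₂d
  set v₃ : Fin 6 → ℝ := ![0, 0, -1, 1, -t, -t] with hv₃d
  set x₁ : Fin 6 → ℝ := ![t, t, 0, 0, 1, -1] with hx₁d
  set x₂ : Fin 6 → ℝ := ![1, -1, t, t, 0, 0] with hx₂d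
  set x₃ : Fin 6 → ℝ := ![0, 0, 1, -1, t, t] with hx₃d
  have ha013 : G u₁ u₂ u₃ 0 1 3 = a := by
    have := h1 0
    simpa [hv₁d] using this
  have hmem1 : u₁ ∈ ({u₁, u₂, u₃} : Set (Fin 6 → ℝ)) := Set.mem_insert _ _
  have hmem2 : u₂ ∈ ({u₁, u₂, u₃} : Set (Fin 6 → ℝ)) :=
    Set.mem_insert_of_mem _ (Set.mem_insert _ _)
  have hmem3 : u₃ ∈ ({u₁, u₂, u₃} : Set (Fin 6 → ℝ)) :=
    Set.mem_insert_of_mem _ (Set.mem_insert_of_mem _ rfl)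
  -- the vectors v₁, v₂, v₃ belong to the span of u₁, u₂, u₃
  have hv1u : v₁ ∈ Submodule.span ℝ ({u₁, u₂, u₃} : Set (Fin 6 → ℝ)) := by
    have hsv : a • v₁ = (u₂ 1 * u₃ 3 - u₃ 1 * u₂ 3) • u₁ + (-(u₁ 1 * u₃ 3 - u₃ 1 * u₁ 3)) • u₂ + (u₁ 1 * u₂ 3 - u₂ 1 * u₁ 3) • u₃ := by
      funext l
      have e := h1 l
      rw [G_expand] at e
      simp only [Pi.add_apply, Pi.smul_apply, smul_eq_mul]
      linear_combination -e
    have hrw : v₁ = a⁻¹ • ((u₂ 1 * u₃ 3 - u₃ 1 * u₂ 3) • u₁ + (-(u₁ 1 * u₃ 3 - u₃ 1 * u₁ 3)) • u₂ + (u₁ 1 * u₂ 3 - u₂ 1 * u₁ 3) • u₃) := by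
      rw [← hsv, smul_smul, inv_mul_cancel₀ ha, one_smul]
    rw [hrw]
    exact Submodule.smul_mem _ _ (add_mem (add_mem
      (Submodule.smul_mem _ _ (Submodule.subset_span hmem1))
      (Submodule.smul_mem _ _ (Submodule.subset_span hmem2)))
      (Submodule.smul_mem _ _ (Submodule.subset_span hmem3)))
  have hv2u : v₂ ∈ Submodule.span ℝ ({u₁, u₂, u₃} : Set (Fin 6 → ℝ)) := by
    have hsv : a • v₂ = (u₂ 3 * u₃ 0 - u₃ 3 * u₂ 0) • u₁ + (-(u₁ 3 * u₃ 0 - u₃ 3 * u₁ 0)) • u₂ + (u₁ 3 * u₂ 0 - u₂ 3 * u₁ 0) • u₃ := by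
      funext l
      have e := h2 l
      rw [G_expand] at e
      simp only [Pi.add_apply, Pi.smul_apply, smul_eq_mul]
      linear_combination -e
    have hrw : v₂ = a⁻¹ • ((u₂ 3 * u₃ 0 - u₃ 3 * u₂ 0) • u₁ + (-(u₁ 3 * u₃ 0 - u₃ 3 * u₁ 0)) • u₂ + (u₁ 3 * u₂ 0 - u₂ 3 * u₁ 0) • u₃) := by
      rw [← hsv, smul_smul, inv_mul_cancel₀ ha, one_smul]
    rw [hrw]
    exact Submodule.smul_mem _ _ (add_mem (add_mem
      (Submodule.smul_mem _ _ (Submodule.subset_span hmem1))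
      (Submodule.smul_mem _ _ (Submodule.subset_span hmem2)))
      (Submodule.smul_mem _ _ (Submodule.subset_span hmem3)))
  have hv3u : v₃ ∈ Submodule.span ℝ ({u₁, u₂, u₃} : Set (Fin 6 → ℝ)) := by
    have hsv : a • v₃ = (u₂ 0 * u₃ 1 - u₃ 0 * u₂ 1) • u₁ + (-(u₁ 0 * u₃ 1 - u₃ 0 * u₁ 1)) • u₂ + (u₁ 0 * u₂ 1 - u₂ 0 * u₁ 1) • u₃ := by
      funext l
      have e := h3 l
      rw [G_expand] at e
      simp only [Pi.add_apply, Pi.smul_apply, smul_eq_mul]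
      linear_combination -e
    have hrw : v₃ = a⁻¹ • ((u₂ 0 * u₃ 1 - u₃ 0 * u₂ 1) • u₁ + (-(u₁ 0 * u₃ 1 - u₃ 0 * u₁ 1)) • u₂ + (u₁ 0 * u₂ 1 - u₂ 0 * u₁ 1) • u₃) := by
      rw [← hsv, smul_smul, inv_mul_cancel₀ ha, one_smul]
    rw [hrw]
    exact Submodule.smul_mem _ _ (add_mem (add_mem
      (Submodule.smul_mem _ _ (Submodule.subset_span hmem1))
      (Submodule.smul_mem _ _ (Submodule.subset_span hmem2)))
      (Submodule.smul_mem _ _ (Submodule.subset_span hmem3)))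
  have hx1 : x₁ = t • v₁ + t • v₂ := by
    funext l
    fin_cases l
    · show (t:ℝ) = t * 1 + t * 0
      first
      | ring1
      | linear_combination ht
      | linear_combination -ht
      | linear_combination ht / 2
      | linear_combination -ht / 2
    · show (t:ℝ) = t * 0 + t * 1
      first
      | ring1
      | linear_combination ht
      | linear_combination -ht
      | linear_combination ht / 2
      | linear_combination -ht / 2
    · show (0:ℝ) = t * t + t * -t
      first
      | ring1
      | linear_combination ht
      | linear_combination -ht
      | linear_combination ht / 2
      | linear_combination -ht / 2
    · show (0:ℝ) = t * 0 + t * 0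
      first
      | ring1
      | linear_combination ht
      | linear_combination -ht
      | linear_combination ht / 2
      | linear_combination -ht / 2
    · show (1:ℝ) = t * t + t * -1
      first
      | ring1
      | linear_combination ht
      | linear_combination -ht
      | linear_combination ht / 2
      | linear_combination -ht / 2
    · show (-1:ℝ) = t * 1 + t * -t
      first
      | ring1
      | linear_combination ht
      | linear_combination -ht
      | linear_combination ht / 2
      | linear_combination -ht / 2
  have hx2 : x₂ = v₁ - v₂ + t • v₃ := by
    funext l
    fin_cases l
    · show (1:ℝ) = 1 - 0 + t * 0
      first
      | ring1
      | linear_combination ht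
      | linear_combination -ht
      | linear_combination ht / 2
      | linear_combination -ht / 2
    · show (-1:ℝ) = 0 - 1 + t * 0
      first
      | ring1
      | linear_combination ht
      | linear_combination -ht
      | linear_combination ht / 2
      | linear_combination -ht / 2
    · show (t:ℝ) = t - -t + t * -1
      first
      | ring1
      | linear_combination ht
      | linear_combination -ht
      | linear_combination ht / 2
      | linear_combination -ht / 2
    · show (t:ℝ) = 0 - 0 + t * 1
      first
      | ring1
      | linear_combination ht
      | linear_combination -ht
      | linear_combination ht / 2
      | linear_combination -ht / 2
    · show (0:ℝ) = t - -1 + t * -t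
      first
      | ring1
      | linear_combination ht
      | linear_combination -ht
      | linear_combination ht / 2
      | linear_combination -ht / 2
    · show (0:ℝ) = 1 - -t + t * -t
      first
      | ring1
      | linear_combination ht
      | linear_combination -ht
      | linear_combination ht / 2
      | linear_combination -ht / 2
  have hx3 : x₃ = -v₃ := by
    funext l
    fin_cases l
    · show (0:ℝ) = -0
      first
      | ring1
      | linear_combination ht
      | linear_combination -ht
      | linear_combination ht / 2
      | linear_combination -ht / 2
    · show (0:ℝ) = -0
      first
      | ring1
      | linear_combination ht
      | linear_combination -ht
      | linear_combination ht / 2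
      | linear_combination -ht / 2
    · show (1:ℝ) = -(-1)
      first
      | ring1
      | linear_combination ht
      | linear_combination -ht
      | linear_combination ht / 2
      | linear_combination -ht / 2
    · show (-1:ℝ) = -(1:ℝ)
      first
      | ring1
      | linear_combination ht
      | linear_combination -ht
      | linear_combination ht / 2
      | linear_combination -ht / 2
    · show (t:ℝ) = -(-t)
      first
      | ring1
      | linear_combination ht
      | linear_combination -ht
      | linear_combination ht / 2
      | linear_combination -ht / 2
    · show (t:ℝ) = -(-t)
      first
      | ring1
      | linear_combination ht
      | linear_combination -ht
      | linear_combination ht / 2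
      | linear_combination -ht / 2
  have hv1x : v₁ = ((t - 1) / 2) • x₁ + (1 / 2 : ℝ) • x₂ + (t / 2) • x₃ := by
    funext l
    fin_cases l
    · show (1:ℝ) = (t-1)/2 * t + 1/2 * 1 + t/2 * 0
      first
      | ring1
      | linear_combination ht
      | linear_combination -ht
      | linear_combination ht / 2
      | linear_combination -ht / 2
    · show (0:ℝ) = (t-1)/2 * t + 1/2 * -1 + t/2 * 0
      first
      | ring1
      | linear_combination ht
      | linear_combination -ht
      | linear_combination ht / 2
      | linear_combination -ht / 2
    · show (t:ℝ) = (t-1)/2 * 0 + 1/2 * t + t/2 * 1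
      first
      | ring1
      | linear_combination ht
      | linear_combination -ht
      | linear_combination ht / 2
      | linear_combination -ht / 2
    · show (0:ℝ) = (t-1)/2 * 0 + 1/2 * t + t/2 * -1
      first
      | ring1
      | linear_combination ht
      | linear_combination -ht
      | linear_combination ht / 2
      | linear_combination -ht / 2
    · show (t:ℝ) = (t-1)/2 * 1 + 1/2 * 0 + t/2 * t
      first
      | ring1
      | linear_combination ht
      | linear_combination -ht
      | linear_combination ht / 2
      | linear_combination -ht / 2
    · show (1:ℝ) = (t-1)/2 * -1 + 1/2 * 0 + t/2 * t
      first
      | ring1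
      | linear_combination ht
      | linear_combination -ht
      | linear_combination ht / 2
      | linear_combination -ht / 2
  have hv2x : v₂ = ((t - 1) / 2) • x₁ + (-(1 / 2) : ℝ) • x₂ + (-(t / 2)) • x₃ := by
    funext l
    fin_cases l
    · show (0:ℝ) = (t-1)/2 * t + -(1/2) * 1 + -(t/2) * 0
      first
      | ring1
      | linear_combination ht
      | linear_combination -ht
      | linear_combination ht / 2
      | linear_combination -ht / 2
    · show (1:ℝ) = (t-1)/2 * t + -(1/2) * -1 + -(t/2) * 0
      first
      | ring1
      | linear_combination ht
      | linear_combination -ht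
      | linear_combination ht / 2
      | linear_combination -ht / 2
    · show (-t:ℝ) = (t-1)/2 * 0 + -(1/2) * t + -(t/2) * 1
      first
      | ring1
      | linear_combination ht
      | linear_combination -ht
      | linear_combination ht / 2
      | linear_combination -ht / 2
    · show (0:ℝ) = (t-1)/2 * 0 + -(1/2) * t + -(t/2) * -1
      first
      | ring1
      | linear_combination ht
      | linear_combination -ht
      | linear_combination ht / 2
      | linear_combination -ht / 2
    · show (-1:ℝ) = (t-1)/2 * 1 + -(1/2) * 0 + -(t/2) * t
      first
      | ring1
      | linear_combination ht
      | linear_combination -ht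
      | linear_combination ht / 2
      | linear_combination -ht / 2
    · show (-t:ℝ) = (t-1)/2 * -1 + -(1/2) * 0 + -(t/2) * t
      first
      | ring1
      | linear_combination ht
      | linear_combination -ht
      | linear_combination ht / 2
      | linear_combination -ht / 2
  have hv3x : v₃ = (-1 : ℝ) • x₃ := by
    rw [hx3]; funext l; simp
  have hxmem1 : x₁ ∈ ({x₁, x₂, x₃} : Set (Fin 6 → ℝ)) := Set.mem_insert _ _
  have hxmem2 : x₂ ∈ ({x₁, x₂, x₃} : Set (Fin 6 → ℝ)) :=
    Set.mem_insert_of_mem _ (Set.mem_insert _ _)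
  have hxmem3 : x₃ ∈ ({x₁, x₂, x₃} : Set (Fin 6 → ℝ)) :=
    Set.mem_insert_of_mem _ (Set.mem_insert_of_mem _ rfl)
  have hv1xm : v₁ ∈ Submodule.span ℝ ({x₁, x₂, x₃} : Set (Fin 6 → ℝ)) := by
    rw [hv1x]
    exact add_mem (add_mem (Submodule.smul_mem _ _ (Submodule.subset_span hxmem1))
      (Submodule.smul_mem _ _ (Submodule.subset_span hxmem2)))
      (Submodule.smul_mem _ _ (Submodule.subset_span hxmem3))
  have hv2xm : v₂ ∈ Submodule.span ℝ ({x₁, x₂, x₃} : Set (Fin 6 → ℝ)) := by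
    rw [hv2x]
    exact add_mem (add_mem (Submodule.smul_mem _ _ (Submodule.subset_span hxmem1))
      (Submodule.smul_mem _ _ (Submodule.subset_span hxmem2)))
      (Submodule.smul_mem _ _ (Submodule.subset_span hxmem3))
  have hv3xm : v₃ ∈ Submodule.span ℝ ({x₁, x₂, x₃} : Set (Fin 6 → ℝ)) := by
    rw [hv3x]
    exact Submodule.smul_mem _ _ (Submodule.subset_span hxmem3)
  -- each uₘ is a combination of v₁, v₂, v₃
  have hurec : ∀ x : Fin 6 → ℝ, (x = u₁ ∨ x = u₂ ∨ x = u₃) →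
      x = x 0 • v₁ + x 1 • v₂ + x 3 • v₃ := by
    intro x hx
    funext l
    have hl := G_laplace u₁ u₂ u₃ x hx l
    rw [ha013, h1 l, h2 l, h3 l] at hl
    simp only [Pi.add_apply, Pi.smul_apply, smul_eq_mul]
    apply mul_left_cancel₀ ha
    linear_combination hl
  apply le_antisymm
  · rw [Submodule.span_le]
    rintro z hz
    simp only [Set.mem_insert_iff, Set.mem_singleton_iff] at hz
    have hzm : z = u₁ ∨ z = u₂ ∨ z = u₃ := hz
    rw [SetLike.mem_coe, hurec z hzm]
    exact add_mem (add_mem (Submodule.smul_mem _ _ hv1xm) (Submodule.smul_mem _ _ hv2xm))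
      (Submodule.smul_mem _ _ hv3xm)
  · rw [Submodule.span_le]
    rintro z hz
    simp only [Set.mem_insert_iff, Set.mem_singleton_iff] at hz
    rcases hz with rfl | rfl | rfl
    · rw [SetLike.mem_coe, hx1]
      exact add_mem (Submodule.smul_mem _ _ hv1u) (Submodule.smul_mem _ _ hv2u)
    · rw [SetLike.mem_coe, hx2]
      exact add_mem (sub_mem hv1u hv2u) (Submodule.smul_mem _ _ hv3u)
    · rw [SetLike.mem_coe, hx3]
      exact neg_mem hv3u

lemma phi_sq : phi ^ 2 = phi + 1 := by
  have h5 : Real.sqrt 5 * Real.sqrt 5 = 5 := Real.mul_self_sqrt (by norm_num)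
  show ((1 + Real.sqrt 5) / 2) ^ 2 = (1 + Real.sqrt 5) / 2 + 1
  linear_combination h5 / 4

set_option maxHeartbeats 2000000 in
/-- A 3-dimensional subspace of ℝ⁶ whose Grassmann coordinates satisfy both the prolate
alternation equations `G_{213} = G_{124} = G_{136} = G_{145} = G_{516} = G_{235} = G_{246}
= G_{256} = G_{435} = G_{346}` and the oblate alternation equations `G_{215} = G_{216} =
G_{314} = G_{135} = G_{146} = G_{324} = G_{236} = G_{245} = G_{536} = G_{546}` is either
the icosahedral slope or its algebraic conjugate. -/
theorem alternation_characterizes_slope (u₁ u₂ u₃ : Fin 6 → ℝ) (F : Submodule ℝ (Fin 6 → ℝ))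
    (hF : F = Submodule.span ℝ ({u₁, u₂, u₃} : Set (Fin 6 → ℝ)))
    (hind : LinearIndependent ℝ ![u₁, u₂, u₃])
    -- prolate alternation equations
    (hp1 : G u₁ u₂ u₃ 1 0 2 = G u₁ u₂ u₃ 0 1 3)
    (hp2 : G u₁ u₂ u₃ 0 1 3 = G u₁ u₂ u₃ 0 2 5)
    (hp3 : G u₁ u₂ u₃ 0 2 5 = G u₁ u₂ u₃ 0 3 4)
    (hp4 : G u₁ u₂ u₃ 0 3 4 = G u₁ u₂ u₃ 4 0 5)
    (hp5 : G u₁ u₂ u₃ 4 0 5 = G u₁ u₂ u₃ 1 2 4)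
    (hp6 : G u₁ u₂ u₃ 1 2 4 = G u₁ u₂ u₃ 1 3 5)
    (hp7 : G u₁ u₂ u₃ 1 3 5 = G u₁ u₂ u₃ 1 4 5)
    (hp8 : G u₁ u₂ u₃ 1 4 5 = G u₁ u₂ u₃ 3 2 4)
    (hp9 : G u₁ u₂ u₃ 3 2 4 = G u₁ u₂ u₃ 2 3 5)
    -- oblate alternation equations
    (hq1 : G u₁ u₂ u₃ 1 0 4 = G u₁ u₂ u₃ 1 0 5)
    (hq2 : G u₁ u₂ u₃ 1 0 5 = G u₁ u₂ u₃ 2 0 3)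
    (hq3 : G u₁ u₂ u₃ 2 0 3 = G u₁ u₂ u₃ 0 2 4)
    (hq4 : G u₁ u₂ u₃ 0 2 4 = G u₁ u₂ u₃ 0 3 5)
    (hq5 : G u₁ u₂ u₃ 0 3 5 = G u₁ u₂ u₃ 2 1 3)
    (hq6 : G u₁ u₂ u₃ 2 1 3 = G u₁ u₂ u₃ 1 2 5)
    (hq7 : G u₁ u₂ u₃ 1 2 5 = G u₁ u₂ u₃ 1 3 4)
    (hq8 : G u₁ u₂ u₃ 1 3 4 = G u₁ u₂ u₃ 4 2 5)
    (hq9 : G u₁ u₂ u₃ 4 2 5 = G u₁ u₂ u₃ 4 3 5)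
    :
    F = Submodule.span ℝ ({w1, w2, w3} : Set (Fin 6 → ℝ)) ∨
    F = Submodule.span ℝ ({r1, r2, r3} : Set (Fin 6 → ℝ)) := by
  set a := G u₁ u₂ u₃ 0 1 3 with ha_def
  set b := G u₁ u₂ u₃ 0 2 4 with hb_def
  -- the prolate chain
  have e102 : G u₁ u₂ u₃ 1 0 2 = a := hp1
  have e025 : G u₁ u₂ u₃ 0 2 5 = a := hp2.symm
  have e034 : G u₁ u₂ u₃ 0 3 4 = a := (hp2.trans hp3).symm
  have e405 : G u₁ u₂ u₃ 4 0 5 = a := (hp2.trans (hp3.trans hp4)).symm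
  have e124 : G u₁ u₂ u₃ 1 2 4 = a := (hp2.trans (hp3.trans (hp4.trans hp5))).symm
  have e135 : G u₁ u₂ u₃ 1 3 5 = a :=
    (hp2.trans (hp3.trans (hp4.trans (hp5.trans hp6)))).symm
  have e145 : G u₁ u₂ u₃ 1 4 5 = a :=
    (hp2.trans (hp3.trans (hp4.trans (hp5.trans (hp6.trans hp7))))).symm
  have e324 : G u₁ u₂ u₃ 3 2 4 = a :=
    (hp2.trans (hp3.trans (hp4.trans (hp5.trans (hp6.trans (hp7.trans hp8)))))).symm
  have e235 : G u₁ u₂ u₃ 2 3 5 = a :=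
    (hp2.trans (hp3.trans (hp4.trans (hp5.trans (hp6.trans (hp7.trans (hp8.trans
      hp9))))))).symm
  -- the oblate chain
  have e203 : G u₁ u₂ u₃ 2 0 3 = b := hq3
  have e105 : G u₁ u₂ u₃ 1 0 5 = b := hq2.trans hq3
  have e104 : G u₁ u₂ u₃ 1 0 4 = b := hq1.trans (hq2.trans hq3)
  have e035 : G u₁ u₂ u₃ 0 3 5 = b := hq4.symm
  have e213 : G u₁ u₂ u₃ 2 1 3 = b := (hq4.trans hq5).symm
  have e125 : G u₁ u₂ u₃ 1 2 5 = b := (hq4.trans (hq5.trans hq6)).symm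
  have e134 : G u₁ u₂ u₃ 1 3 4 = b := (hq4.trans (hq5.trans (hq6.trans hq7))).symm
  have e425 : G u₁ u₂ u₃ 4 2 5 = b :=
    (hq4.trans (hq5.trans (hq6.trans (hq7.trans hq8)))).symm
  have e435 : G u₁ u₂ u₃ 4 3 5 = b :=
    (hq4.trans (hq5.trans (hq6.trans (hq7.trans (hq8.trans hq9))))).symm
  -- derived values at sorted triples
  have e012 : G u₁ u₂ u₃ 0 1 2 = -a := by rw [G_swap12 u₁ u₂ u₃ 0 1 2, e102]
  have e014 : G u₁ u₂ u₃ 0 1 4 = -b := by rw [G_swap12 u₁ u₂ u₃ 0 1 4, e104]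
  have e015 : G u₁ u₂ u₃ 0 1 5 = -b := by rw [G_swap12 u₁ u₂ u₃ 0 1 5, e105]
  have e023 : G u₁ u₂ u₃ 0 2 3 = -b := by rw [G_swap12 u₁ u₂ u₃ 0 2 3, e203]
  have e045 : G u₁ u₂ u₃ 0 4 5 = -a := by rw [G_swap12 u₁ u₂ u₃ 0 4 5, e405]
  have e123 : G u₁ u₂ u₃ 1 2 3 = -b := by rw [G_swap12 u₁ u₂ u₃ 1 2 3, e213]
  have e234 : G u₁ u₂ u₃ 2 3 4 = -a := by rw [G_swap12 u₁ u₂ u₃ 2 3 4, e324]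
  have e245 : G u₁ u₂ u₃ 2 4 5 = -b := by rw [G_swap12 u₁ u₂ u₃ 2 4 5, e425]
  have e345 : G u₁ u₂ u₃ 3 4 5 = -b := by rw [G_swap12 u₁ u₂ u₃ 3 4 5, e435]
  -- the quadratic relation  b² = a² + a b
  have hb2 : b ^ 2 = a ^ 2 + a * b := by
    have hP := G_plucker u₁ u₂ u₃
    rw [e012, e034, ← ha_def, ← hb_def, e014, e023] at hP
    linear_combination hP
  -- a ≠ 0
  have ha : a ≠ 0 := by
    intro ha0
    have hb0 : b = 0 := by
      have : b ^ 2 = 0 := by rw [hb2, ha0]; ring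
      exact pow_eq_zero_iff (by norm_num : 2 ≠ 0) |>.mp this
    have z013 : G u₁ u₂ u₃ 0 1 3 = 0 := by rw [← ha_def, ha0]
    have z024 : G u₁ u₂ u₃ 0 2 4 = 0 := by rw [← hb_def, hb0]
    have z012 : G u₁ u₂ u₃ 0 1 2 = 0 := by rw [e012, ha0, neg_zero]
    have z014 : G u₁ u₂ u₃ 0 1 4 = 0 := by rw [e014, hb0, neg_zero]
    have z015 : G u₁ u₂ u₃ 0 1 5 = 0 := by rw [e015, hb0, neg_zero]
    have z023 : G u₁ u₂ u₃ 0 2 3 = 0 := by rw [e023, hb0, neg_zero]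
    have z025 : G u₁ u₂ u₃ 0 2 5 = 0 := by rw [e025, ha0]
    have z034 : G u₁ u₂ u₃ 0 3 4 = 0 := by rw [e034, ha0]
    have z035 : G u₁ u₂ u₃ 0 3 5 = 0 := by rw [e035, hb0]
    have z045 : G u₁ u₂ u₃ 0 4 5 = 0 := by rw [e045, ha0, neg_zero]
    have z123 : G u₁ u₂ u₃ 1 2 3 = 0 := by rw [e123, hb0, neg_zero]
    have z124 : G u₁ u₂ u₃ 1 2 4 = 0 := by rw [e124, ha0]
    have z125 : G u₁ u₂ u₃ 1 2 5 = 0 := by rw [e125, hb0]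
    have z134 : G u₁ u₂ u₃ 1 3 4 = 0 := by rw [e134, hb0]
    have z135 : G u₁ u₂ u₃ 1 3 5 = 0 := by rw [e135, ha0]
    have z145 : G u₁ u₂ u₃ 1 4 5 = 0 := by rw [e145, ha0]
    have z234 : G u₁ u₂ u₃ 2 3 4 = 0 := by rw [e234, ha0, neg_zero]
    have z235 : G u₁ u₂ u₃ 2 3 5 = 0 := by rw [e235, ha0]
    have z245 : G u₁ u₂ u₃ 2 4 5 = 0 := by rw [e245, hb0, neg_zero]
    have z345 : G u₁ u₂ u₃ 3 4 5 = 0 := by rw [e345, hb0, neg_zero]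
    apply dep_of_G_zero u₁ u₂ u₃ ?_ hind
    apply G_all_zero
    exact G_sorted_zero u₁ u₂ u₃ z012 z013 z014 z015 z023 z024 z025 z034 z035 z045
      z123 z124 z125 z134 z135 z145 z234 z235 z245 z345
  -- the slope parameter
  have hb' : b = a * (b / a) := by field_simp
  have ht : (b / a) ^ 2 = b / a + 1 := by
    field_simp
    first
    | linear_combination hb2
    | linear_combination -hb2
    | linear_combination (a - 1) * hb2
    | linear_combination (1 - a) * hb2
    | linear_combination a * hb2
    | linear_combination -a * hb2
  -- the three vector-value computations
  have h1 : ∀ l, G u₁ u₂ u₃ l 1 3 = a * (![1, 0, b / a, 0, b / a, 1] : Fin 6 → ℝ) l := by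
    intro l
    fin_cases l
    · show G u₁ u₂ u₃ 0 1 3 = a * 1
      rw [mul_one, ← ha_def]
    · show G u₁ u₂ u₃ 1 1 3 = a * 0
      rw [mul_zero, G_rep12]
    · show G u₁ u₂ u₃ 2 1 3 = a * (b / a)
      rw [e213]; exact hb'
    · show G u₁ u₂ u₃ 3 1 3 = a * 0
      rw [mul_zero, G_rep13]
    · show G u₁ u₂ u₃ 4 1 3 = a * (b / a)
      rw [G_cycle u₁ u₂ u₃ 4 1 3, e134]; exact hb'
    · show G u₁ u₂ u₃ 5 1 3 = a * 1
      rw [mul_one, G_cycle u₁ u₂ u₃ 5 1 3, e135]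
  have h2 : ∀ l, G u₁ u₂ u₃ 0 l 3 = a * (![0, 1, -(b / a), 0, -1, -(b / a)] : Fin 6 → ℝ) l := by
    intro l
    fin_cases l
    · show G u₁ u₂ u₃ 0 0 3 = a * 0
      rw [mul_zero, G_rep12]
    · show G u₁ u₂ u₃ 0 1 3 = a * 1
      rw [mul_one, ← ha_def]
    · show G u₁ u₂ u₃ 0 2 3 = a * -(b / a)
      rw [e023, mul_neg, ← hb']
    · show G u₁ u₂ u₃ 0 3 3 = a * 0
      rw [mul_zero, G_rep23]
    · show G u₁ u₂ u₃ 0 4 3 = a * -1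
      rw [G_swap23 u₁ u₂ u₃ 0 4 3, e034]; ring
    · show G u₁ u₂ u₃ 0 5 3 = a * -(b / a)
      rw [G_swap23 u₁ u₂ u₃ 0 5 3, e035, mul_neg, ← hb']
  have h3 : ∀ l, G u₁ u₂ u₃ 0 1 l = a * (![0, 0, -1, 1, -(b / a), -(b / a)] : Fin 6 → ℝ) l := by
    intro l
    fin_cases l
    · show G u₁ u₂ u₃ 0 1 0 = a * 0
      rw [mul_zero, G_rep13]
    · show G u₁ u₂ u₃ 0 1 1 = a * 0
      rw [mul_zero, G_rep23]
    · show G u₁ u₂ u₃ 0 1 2 = a * -1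
      rw [e012]; ring
    · show G u₁ u₂ u₃ 0 1 3 = a * 1
      rw [mul_one, ← ha_def]
    · show G u₁ u₂ u₃ 0 1 4 = a * -(b / a)
      rw [e014, mul_neg, ← hb']
    · show G u₁ u₂ u₃ 0 1 5 = a * -(b / a)
      rw [e015, mul_neg, ← hb']
  have hspan := span_eq_param u₁ u₂ u₃ a (b / a) ha ht h1 h2 h3
  -- t is either φ or 1 - φ
  have hfac : (b / a - phi) * (b / a - (1 - phi)) = 0 := by
    linear_combination ht - phi_sq
  rcases mul_eq_zero.mp hfac with hcase | hcase
  · left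
    have hteq : b / a = phi := sub_eq_zero.mp hcase
    rw [hteq] at hspan
    rw [hF, hspan]
    rfl
  · right
    have hteq : b / a = 1 - phi := sub_eq_zero.mp hcase
    rw [hteq] at hspan
    rw [hF, hspan]
    rfl
end

section
/- The Grassmann coordinates G_{ijk} = G_{ijk}(r₁,r₂,r₃) of the conjugate slope E′ = span(r₁,r₂,r₃) also satisfy the prolate alternation equations G_{213} = G_{124} = G_{136} = G_{145} = G_{516} = G_{235} = G_{246} = G_{256} = G_{435} = G_{346} and the oblate alternation equations G_{215} = G_{216} = G_{314} = G_{135} = G_{146} = G_{324} = G_{236} = G_{245} = G_{536} = G_{546}, with the common oblate value equal to (1−φ) times the common prolate value, and the prolate value nonzero. -/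
lemma cons_val_five' {α : Type*} {m : ℕ} (x : α) (u : Fin (m+5) → α) :
    Matrix.vecCons x u 5 = u 4 := rfl

/-- The Grassmann coordinates of the conjugate slope `E' = span(r₁,r₂,r₃)` also satisfy
the prolate and oblate alternation equations, with the common oblate value equal to
`(1−φ)` times the common prolate value, which is nonzero. -/
theorem conjugate_slope_alternation :
    G r1 r2 r3 1 0 2 = G r1 r2 r3 0 1 3 ∧
    G r1 r2 r3 0 1 3 = G r1 r2 r3 0 2 5 ∧
    G r1 r2 r3 0 2 5 = G r1 r2 r3 0 3 4 ∧
    G r1 r2 r3 0 3 4 = G r1 r2 r3 4 0 5 ∧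
    G r1 r2 r3 4 0 5 = G r1 r2 r3 1 2 4 ∧
    G r1 r2 r3 1 2 4 = G r1 r2 r3 1 3 5 ∧
    G r1 r2 r3 1 3 5 = G r1 r2 r3 1 4 5 ∧
    G r1 r2 r3 1 4 5 = G r1 r2 r3 3 2 4 ∧
    G r1 r2 r3 3 2 4 = G r1 r2 r3 2 3 5 ∧
    G r1 r2 r3 1 0 4 = G r1 r2 r3 1 0 5 ∧
    G r1 r2 r3 1 0 5 = G r1 r2 r3 2 0 3 ∧
    G r1 r2 r3 2 0 3 = G r1 r2 r3 0 2 4 ∧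
    G r1 r2 r3 0 2 4 = G r1 r2 r3 0 3 5 ∧
    G r1 r2 r3 0 3 5 = G r1 r2 r3 2 1 3 ∧
    G r1 r2 r3 2 1 3 = G r1 r2 r3 1 2 5 ∧
    G r1 r2 r3 1 2 5 = G r1 r2 r3 1 3 4 ∧
    G r1 r2 r3 1 3 4 = G r1 r2 r3 4 2 5 ∧
    G r1 r2 r3 4 2 5 = G r1 r2 r3 4 3 5 ∧
    G r1 r2 r3 1 0 4 = (1 - phi) * G r1 r2 r3 1 0 2 ∧
    G r1 r2 r3 1 0 2 ≠ 0 := by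
  have h5 : Real.sqrt 5 ^ 2 = 5 := Real.sq_sqrt (by norm_num)
  have hphi : phi ^ 2 = phi + 1 := by
    simp only [phi]; nlinarith [h5]
  have hne : phi ≠ 2 - phi := by
    simp only [phi]; intro h
    have h1 : Real.sqrt 5 = 1 := by linarith
    rw [h1] at h5; norm_num at h5
  refine ⟨?_,?_,?_,?_,?_,?_,?_,?_,?_,?_,?_,?_,?_,?_,?_,?_,?_,?_,?_,?_⟩ <;>
    simp only [G, r1, r2, r3, Matrix.det_fin_three, Matrix.cons_val', Matrix.cons_val_zero,
      Matrix.cons_val_one, Matrix.head_cons, Matrix.head_fin_const, Matrix.empty_val',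
      Matrix.cons_val_fin_one, Matrix.cons_val_two, Matrix.tail_cons, Matrix.cons_val_three,
      Matrix.cons_val_four, cons_val_five', Matrix.cons_val_succ, Matrix.of_apply,
      Matrix.vecHead, Matrix.vecTail, Function.comp]
  all_goals nlinarith [hphi, sq_nonneg (2*phi - 1), Real.sqrt_nonneg 5, h5]
end
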